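/- For fixed ℓ ≥ 1 and κ > -1, the sum A_ℓ(n) = Σ_{n₁+…+n_ℓ=n} Π_{y=1}^ℓ (n_y+1)^κ satisfies A_ℓ(n) / n^{(κ+1)ℓ - 1} → Γ(κ+1)^ℓ / Γ((κ+1)ℓ) as n → ∞. -/

import Mathlib

open Real Filter Finset

open MeasureTheory Set intervalIntegral


section helpers

lemma real_beta {a b : ℝ} (ha : 0 < a) (hb : 0 < b) :
    ∫ t in (0:ℝ)..1, t ^ (a-1) * (1-t) ^ (b-1)
      = Real.Gamma a * Real.Gamma b / Real.Gamma (a+b) := by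
  have key := Complex.Gamma_mul_Gamma_eq_betaIntegral (s:=(a:ℂ)) (t:=(b:ℂ)) (by simpa) (by simpa)
  have h1 : Complex.betaIntegral a b = ((∫ t in (0:ℝ)..1, t^(a-1)*(1-t)^(b-1) : ℝ) : ℂ) := by
    rw [Complex.betaIntegral]
    have : ∀ x ∈ Set.uIcc (0:ℝ) 1, (x:ℂ) ^ ((a:ℂ) - 1) * (1 - (x:ℂ)) ^ ((b:ℂ) - 1)
        = ((x ^ (a-1) * (1-x) ^ (b-1) : ℝ) : ℂ) := by
      intro x hx
      rw [Set.uIcc_of_le (zero_le_one' ℝ)] at hx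
      rw [Complex.ofReal_mul, Complex.ofReal_cpow hx.1,
        Complex.ofReal_cpow (by linarith [hx.2] : (0:ℝ) ≤ 1 - x)]
      push_cast
      ring
    rw [intervalIntegral.integral_congr this]
    exact_mod_cast RCLike.intervalIntegral_ofReal (𝕜 := ℂ) (f := fun x => x ^ (a-1) * (1-x) ^ (b-1)) (μ := volume) (a := 0) (b := 1)
  rw [h1, ← Complex.ofReal_add, Complex.Gamma_ofReal, Complex.Gamma_ofReal,
    Complex.Gamma_ofReal, ← Complex.ofReal_mul, ← Complex.ofReal_mul] at key
  have h2 := Complex.ofReal_injective key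
  have hne : Real.Gamma (a+b) ≠ 0 := (Real.Gamma_pos_of_pos (by linarith)).ne'
  field_simp [h2]
  rw [h2]; ring


lemma exists_bound {γ A : ℝ} {c : ℕ → ℝ} (hc0 : ∀ k, 0 ≤ c k)
    (hc : Filter.Tendsto (fun k : ℕ => c k / (k:ℝ)^γ) atTop (nhds A)) :
    ∃ C : ℝ, 0 < C ∧ ∀ k : ℕ, 1 ≤ k → c k ≤ C * (k:ℝ)^γ := by
  have hA : 0 ≤ A := by
    refine ge_of_tendsto hc ?_
    filter_upwards [eventually_ge_atTop 1] with k hk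
    have : (0:ℝ) < (k:ℝ)^γ := Real.rpow_pos_of_pos (by exact_mod_cast hk) _
    exact div_nonneg (hc0 k) this.le
  obtain ⟨N, hN⟩ := eventually_atTop.mp (hc.eventually_lt_const (lt_add_one A))
  refine ⟨(A + 1) + ∑ k ∈ range N, c k / (k:ℝ)^γ, ?_, ?_⟩
  · have : 0 ≤ ∑ k ∈ range N, c k / (k:ℝ)^γ := by
      refine Finset.sum_nonneg fun k _ => ?_
      exact div_nonneg (hc0 k) (Real.rpow_nonneg (Nat.cast_nonneg k) _)
    linarith
  · intro k hk1
    have hkpos : (0:ℝ) < (k:ℝ)^γ := Real.rpow_pos_of_pos (by exact_mod_cast hk1) _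
    have hsum : 0 ≤ ∑ k ∈ range N, c k / (k:ℝ)^γ := by
      refine Finset.sum_nonneg fun k _ => ?_
      exact div_nonneg (hc0 k) (Real.rpow_nonneg (Nat.cast_nonneg k) _)
    rcases le_or_gt N k with h | h
    · have := le_of_lt (hN k h)
      rw [div_le_iff₀ hkpos] at this
      nlinarith
    · have : c k / (k:ℝ)^γ ≤ ∑ j ∈ range N, c j / (j:ℝ)^γ :=
        Finset.single_le_sum (f := fun j => c j / (j:ℝ)^γ)
          (fun j _ => div_nonneg (hc0 j) (Real.rpow_nonneg (Nat.cast_nonneg j) _))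
          (Finset.mem_range.mpr h)
      rw [div_le_iff₀ hkpos] at this
      nlinarith

lemma floor_le_self {t : ℝ} (ht0 : 0 < t) (ht1 : t < 1) (n : ℕ) : ⌊(n:ℝ)*t⌋₊ ≤ n := by
  have : (n:ℝ)*t ≤ n := by nlinarith [Nat.cast_nonneg (α := ℝ) n]
  calc ⌊(n:ℝ)*t⌋₊ ≤ ⌊(n:ℝ)⌋₊ := Nat.floor_le_floor this
    _ = n := Nat.floor_natCast n

lemma floor_mul_tendsto_atTop {t : ℝ} (ht0 : 0 < t) :
    Filter.Tendsto (fun n : ℕ => ⌊(n:ℝ)*t⌋₊) atTop atTop := by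
  rw [Filter.tendsto_atTop]
  intro b
  filter_upwards [eventually_ge_atTop (Nat.ceil (((b:ℝ)+1)/t))] with n hn
  have hnr : ((b:ℝ)+1)/t ≤ n := le_trans (Nat.le_ceil _) (by exact_mod_cast hn)
  have h1 : (b:ℝ) ≤ (n:ℝ)*t - 1 := by
    rw [div_le_iff₀ ht0] at hnr; nlinarith
  have := h1.trans_lt (Nat.sub_one_lt_floor ((n:ℝ)*t))
  exact_mod_cast this.le

lemma floor_mul_div_tendsto {t : ℝ} (ht0 : 0 < t) :
    Filter.Tendsto (fun n : ℕ => (⌊(n:ℝ)*t⌋₊ : ℝ) / n) atTop (nhds t) := by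
  have hlow : Filter.Tendsto (fun n : ℕ => t - 1/(n:ℝ)) atTop (nhds t) := by
    simpa using tendsto_const_nhds.sub (tendsto_one_div_atTop_nhds_zero_nat (𝕜 := ℝ))
  refine tendsto_of_tendsto_of_tendsto_of_le_of_le' hlow tendsto_const_nhds ?_ ?_
  · filter_upwards [eventually_ge_atTop 1] with n hn
    have hnp : (0:ℝ) < n := by exact_mod_cast hn
    rw [le_div_iff₀ hnp]
    have h := (Nat.sub_one_lt_floor ((n:ℝ)*t)).le
    have he : (t - 1/(n:ℝ)) * n = (n:ℝ)*t - 1 := by field_simp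
    rw [he]; linarith
  · filter_upwards [eventually_ge_atTop 1] with n hn
    have hnp : (0:ℝ) < n := by exact_mod_cast hn
    rw [div_le_iff₀ hnp]
    have := Nat.floor_le (by positivity : (0:ℝ) ≤ (n:ℝ)*t)
    linarith [this]

lemma sub_floor_tendsto_atTop {t : ℝ} (ht0 : 0 < t) (ht1 : t < 1) :
    Filter.Tendsto (fun n : ℕ => (n - ⌊(n:ℝ)*t⌋₊ : ℕ)) atTop atTop := by
  rw [Filter.tendsto_atTop]
  intro b
  filter_upwards [eventually_ge_atTop (Nat.ceil (((b:ℝ))/(1-t)))] with n hn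
  have hnr : ((b:ℝ))/(1-t) ≤ n := le_trans (Nat.le_ceil _) (by exact_mod_cast hn)
  have h1t : (0:ℝ) < 1 - t := by linarith
  have h1 : (b:ℝ) ≤ (n:ℝ)*(1-t) := by rw [div_le_iff₀ h1t] at hnr; linarith
  have hfl : (⌊(n:ℝ)*t⌋₊ : ℝ) ≤ (n:ℝ)*t := Nat.floor_le (by positivity)
  have h2 : (b:ℝ) ≤ ((n - ⌊(n:ℝ)*t⌋₊ : ℕ) : ℝ) := by
    rw [Nat.cast_sub (floor_le_self ht0 ht1 n)]
    nlinarith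
  exact_mod_cast h2

lemma sub_floor_div_tendsto {t : ℝ} (ht0 : 0 < t) (ht1 : t < 1) :
    Filter.Tendsto (fun n : ℕ => ((n - ⌊(n:ℝ)*t⌋₊ : ℕ) : ℝ) / n) atTop (nhds (1-t)) := by
  have h : Filter.Tendsto (fun n : ℕ => 1 - (⌊(n:ℝ)*t⌋₊:ℝ)/n) atTop (nhds (1-t)) :=
    tendsto_const_nhds.sub (floor_mul_div_tendsto ht0)
  refine h.congr' ?_
  filter_upwards [eventually_ge_atTop 1] with n hn
  have hnp : (0:ℝ) < n := by exact_mod_cast hn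
  rw [Nat.cast_sub (floor_le_self ht0 ht1 n), sub_div, div_self hnp.ne']


lemma nat_floor_le_self {t : ℝ} (ht0 : 0 < t) (ht1 : t < 1) (n : ℕ) : ⌊(n:ℝ)*t⌋₊ ≤ n := by
  have : (n:ℝ)*t ≤ n := by nlinarith [Nat.cast_nonneg (α := ℝ) n]
  calc ⌊(n:ℝ)*t⌋₊ ≤ ⌊(n:ℝ)⌋₊ := Nat.floor_le_floor this
    _ = n := Nat.floor_natCast n

lemma bound1 {γ C : ℝ} {c : ℕ → ℝ} (hC0 : 0 < C) (hc0 : ∀ k, 0 ≤ c k)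
    (hC : ∀ k : ℕ, 1 ≤ k → c k ≤ C * (k:ℝ)^γ) {n : ℕ} (hn : 1 ≤ n) {t : ℝ}
    (ht : t ∈ Set.Ioo (0:ℝ) 1) :
    c ⌊(n:ℝ)*t⌋₊ / (n:ℝ)^γ ≤ ((C + c 0) * (2:ℝ)^(-min γ 0)) * t^(min γ 0) := by
  obtain ⟨ht0, ht1⟩ := ht
  have hnp : (0:ℝ) < n := by exact_mod_cast hn
  have hnγ : (0:ℝ) < (n:ℝ)^γ := Real.rpow_pos_of_pos hnp _
  set k := ⌊(n:ℝ)*t⌋₊ with hk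
  rcases le_or_gt 0 γ with hγ | hγ
  · rw [min_eq_right hγ]
    simp only [neg_zero, Real.rpow_zero, mul_one]
    have h1n : (1:ℝ) ≤ (n:ℝ)^γ := Real.one_le_rpow (by exact_mod_cast hn) hγ
    rw [div_le_iff₀ hnγ]
    rcases Nat.eq_zero_or_pos k with h0 | h1
    · rw [h0]; nlinarith [hc0 0]
    · have hkn : (k:ℝ) ≤ n := by exact_mod_cast nat_floor_le_self ht0 ht1 n
      have h3 : c k ≤ C * (k:ℝ)^γ := hC k h1
      have h2 : (k:ℝ)^γ ≤ (n:ℝ)^γ := Real.rpow_le_rpow (Nat.cast_nonneg k) hkn hγ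
      nlinarith [hc0 0]
  · rw [min_eq_left hγ.le]
    have htγ : (0:ℝ) < t^γ := Real.rpow_pos_of_pos ht0 _
    have h2γ : (0:ℝ) < (2:ℝ)^(-γ) := Real.rpow_pos_of_pos two_pos _
    have h2γ1 : (1:ℝ) ≤ (2:ℝ)^(-γ) := Real.one_le_rpow one_le_two (by linarith)
    rw [div_le_iff₀ hnγ]
    rcases Nat.eq_zero_or_pos k with h0 | h1
    · have hnt1 : (n:ℝ)*t < 1 := by
        by_contra h
        push_neg at h
        have : 1 ≤ k := Nat.le_floor (by exact_mod_cast h)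
        omega
      have htn : t ≤ 1/(n:ℝ) := by rw [le_div_iff₀ hnp]; nlinarith
      have hterm : (1:ℝ) ≤ t^γ * (n:ℝ)^γ := by
        have h3 : ((1:ℝ)/n)^γ ≤ t^γ := Real.rpow_le_rpow_of_nonpos ht0 htn hγ.le
        have h4 : ((1:ℝ)/n)^γ = ((n:ℝ)^γ)⁻¹ := by
          rw [one_div, Real.inv_rpow hnp.le]
        rw [h4] at h3
        have h5 := mul_le_mul_of_nonneg_right h3 hnγ.le
        rw [inv_mul_cancel₀ hnγ.ne'] at h5
        exact h5
      rw [h0]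
      have e1 : c 0 ≤ (C + c 0) := by linarith
      have e2 : (C + c 0) ≤ (C + c 0) * (2:ℝ)^(-γ) := le_mul_of_one_le_right (by linarith [hc0 0]) h2γ1
      have e3 : (C + c 0) * (2:ℝ)^(-γ) ≤ ((C + c 0) * (2:ℝ)^(-γ)) * (t^γ * (n:ℝ)^γ) :=
        le_mul_of_one_le_right (mul_nonneg (by linarith [hc0 0]) h2γ.le) hterm
      calc c 0 ≤ (C + c 0) * (2:ℝ)^(-γ) := e1.trans e2
        _ ≤ ((C + c 0) * (2:ℝ)^(-γ)) * (t^γ * (n:ℝ)^γ) := e3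
        _ = (C + c 0) * (2:ℝ)^(-γ) * t^γ * (n:ℝ)^γ := by ring
    · have hkr : (0:ℝ) < k := by exact_mod_cast h1
      have hlt : (n:ℝ)*t < k + 1 := Nat.lt_floor_add_one _
      have hhalf : (n:ℝ)*t/2 ≤ k := by
        have : (k:ℝ) + 1 ≤ 2*k := by exact_mod_cast by omega
        linarith
      have hkγ : (k:ℝ)^γ ≤ ((n:ℝ)*t/2)^γ :=
        Real.rpow_le_rpow_of_nonpos (by positivity) hhalf hγ.le
      have hsplit : ((n:ℝ)*t/2)^γ = (n:ℝ)^γ * t^γ * (2:ℝ)^(-γ) := by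
        rw [div_eq_mul_inv, Real.mul_rpow (by positivity) (by positivity),
          Real.mul_rpow (by positivity) (by positivity), Real.inv_rpow (by norm_num),
          ← Real.rpow_neg (by norm_num)]
      have h3 : c k ≤ C * (k:ℝ)^γ := hC k h1
      have h4 : C * (k:ℝ)^γ ≤ C * ((n:ℝ)^γ * t^γ * (2:ℝ)^(-γ)) := by
        rw [← hsplit]; exact mul_le_mul_of_nonneg_left hkγ hC0.le
      calc c k ≤ C * ((n:ℝ)^γ * t^γ * (2:ℝ)^(-γ)) := h3.trans h4
        _ ≤ (C + c 0) * ((n:ℝ)^γ * t^γ * (2:ℝ)^(-γ)) := by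
            refine mul_le_mul_of_nonneg_right (by linarith [hc0 0]) (by positivity)
        _ = (C + c 0) * (2:ℝ)^(-γ) * t^γ * (n:ℝ)^γ := by ring

lemma bound2 {γ C : ℝ} {d : ℕ → ℝ} (hC0 : 0 < C)
    (hC : ∀ k : ℕ, 1 ≤ k → d k ≤ C * (k:ℝ)^γ) {n : ℕ} (hn : 1 ≤ n) {t : ℝ}
    (ht : t ∈ Set.Ioo (0:ℝ) 1) :
    d (n - ⌊(n:ℝ)*t⌋₊) / (n:ℝ)^γ ≤ C * (1-t)^(min γ 0) := by
  obtain ⟨ht0, ht1⟩ := ht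
  have hnp : (0:ℝ) < n := by exact_mod_cast hn
  have hnγ : (0:ℝ) < (n:ℝ)^γ := Real.rpow_pos_of_pos hnp _
  set k := ⌊(n:ℝ)*t⌋₊ with hk
  have hkn : k ≤ n := nat_floor_le_self ht0 ht1 n
  have hklt : (k:ℝ) ≤ (n:ℝ)*t := Nat.floor_le (by positivity)
  have hm1 : 1 ≤ n - k := by
    have : k < n := by
      rcases eq_or_lt_of_le hkn with h | h
      · exfalso
        rw [h] at hklt
        nlinarith
      · exact h
    omega
  have hmr : ((n - k : ℕ):ℝ) = (n:ℝ) - k := by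
    rw [Nat.cast_sub hkn]
  have hmlow : (n:ℝ)*(1-t) ≤ ((n - k : ℕ):ℝ) := by rw [hmr]; nlinarith
  have hmhigh : ((n - k : ℕ):ℝ) ≤ n := by rw [hmr]; nlinarith [Nat.cast_nonneg (α := ℝ) k]
  have hd := hC (n-k) hm1
  rw [div_le_iff₀ hnγ]
  rcases le_or_gt 0 γ with hγ | hγ
  · rw [min_eq_right hγ, Real.rpow_zero, mul_one]
    have : ((n-k:ℕ):ℝ)^γ ≤ (n:ℝ)^γ := Real.rpow_le_rpow (Nat.cast_nonneg _) hmhigh hγ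
    nlinarith
  · rw [min_eq_left hγ.le]
    have h2 : ((n-k:ℕ):ℝ)^γ ≤ ((n:ℝ)*(1-t))^γ :=
      Real.rpow_le_rpow_of_nonpos (by nlinarith) hmlow hγ.le
    have h3 : ((n:ℝ)*(1-t))^γ = (n:ℝ)^γ * (1-t)^γ :=
      Real.mul_rpow (by positivity) (by linarith)
    calc d (n-k) ≤ C * ((n-k:ℕ):ℝ)^γ := hd
      _ ≤ C * ((n:ℝ)^γ * (1-t)^γ) := by rw [← h3]; exact mul_le_mul_of_nonneg_left h2 hC0.le
      _ = C * (1-t)^γ * (n:ℝ)^γ := by ring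

lemma beta_integrable {p q : ℝ} (hp : -1 < p) (hq : -1 < q) :
    IntegrableOn (fun t : ℝ => t^p * (1-t)^q) (Set.Ioo (0:ℝ) 1) := by
  have h1 : IntervalIntegrable
      (fun x : ℝ => (x:ℂ)^(((p:ℂ)+1) - 1) * (1-(x:ℂ))^(((q:ℂ)+1) - 1)) volume 0 1 :=
    Complex.betaIntegral_convergent (by simp; linarith) (by simp; linarith)
  have h2 := h1.norm
  rw [intervalIntegrable_iff_integrableOn_Ioc_of_le zero_le_one] at h2
  have h3 : IntegrableOn
      (fun x : ℝ => ‖(x:ℂ)^(((p:ℂ)+1) - 1) * (1-(x:ℂ))^(((q:ℂ)+1) - 1)‖) (Set.Ioo (0:ℝ) 1) :=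
    h2.mono_set Set.Ioo_subset_Ioc_self
  refine h3.congr_fun ?_ measurableSet_Ioo
  intro x hx
  obtain ⟨hx0, hx1⟩ := hx
  have e1 : ((p:ℂ)+1) - 1 = (p:ℂ) := by ring
  have e2 : ((q:ℂ)+1) - 1 = (q:ℂ) := by ring
  dsimp only
  rw [e1, e2, norm_mul]
  have : (1 : ℂ) - (x:ℂ) = ((1 - x : ℝ) : ℂ) := by push_cast; ring
  rw [this, Complex.norm_cpow_eq_rpow_re_of_pos hx0,
    Complex.norm_cpow_eq_rpow_re_of_pos (by linarith), Complex.ofReal_re, Complex.ofReal_re]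


noncomputable def Ffun (c d : ℕ → ℝ) (pa pb : ℝ) (n : ℕ) (t : ℝ) : ℝ :=
  (c ⌊(n:ℝ)*t⌋₊ / (n:ℝ)^pa) * (d (n - ⌊(n:ℝ)*t⌋₊) / (n:ℝ)^pb)

lemma Ffun_measurable (c d : ℕ → ℝ) (pa pb : ℝ) (n : ℕ) :
    Measurable (Ffun c d pa pb n) := by
  have h1 : Measurable (fun t : ℝ => ⌊(n:ℝ)*t⌋₊) :=
    Nat.measurable_floor.comp (measurable_id.const_mul _)
  exact ((measurable_from_nat.comp h1).div_const _).mul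
    (((measurable_from_nat (f := d)).comp ((measurable_const.sub h1 : Measurable fun t : ℝ => (n : ℕ) - ⌊(n:ℝ)*t⌋₊))).div_const _)

lemma Ffun_nonneg {c d : ℕ → ℝ} (hc0 : ∀ k, 0 ≤ c k) (hd0 : ∀ k, 0 ≤ d k)
    (pa pb : ℝ) (n : ℕ) (t : ℝ) : 0 ≤ Ffun c d pa pb n t := by
  have := Real.rpow_nonneg (Nat.cast_nonneg (α := ℝ) n) pa
  have := Real.rpow_nonneg (Nat.cast_nonneg (α := ℝ) n) pb
  exact mul_nonneg (div_nonneg (hc0 _) (by assumption)) (div_nonneg (hd0 _) (by assumption))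

lemma Ffun_integrableOn {c d : ℕ → ℝ} (hc0 : ∀ k, 0 ≤ c k) (hd0 : ∀ k, 0 ≤ d k)
    (pa pb : ℝ) {n : ℕ} (hn : 1 ≤ n) :
    IntegrableOn (Ffun c d pa pb n) (Set.Ioc (0:ℝ) 1) := by
  have hnp : (0:ℝ) < n := by exact_mod_cast hn
  have hpa : (0:ℝ) < (n:ℝ)^pa := Real.rpow_pos_of_pos hnp _
  have hpb : (0:ℝ) < (n:ℝ)^pb := Real.rpow_pos_of_pos hnp _
  refine Measure.integrableOn_of_bounded (by simp)
    (Ffun_measurable c d pa pb n).aestronglyMeasurable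
    (M := (∑ j ∈ range (n+1), c j / (n:ℝ)^pa) * (∑ j ∈ range (n+1), d j / (n:ℝ)^pb)) ?_
  rw [ae_restrict_iff' measurableSet_Ioc]
  refine Filter.Eventually.of_forall fun t ht => ?_
  obtain ⟨ht0, ht1⟩ := ht
  have hkn : ⌊(n:ℝ)*t⌋₊ ≤ n := by
    calc ⌊(n:ℝ)*t⌋₊ ≤ ⌊(n:ℝ)⌋₊ := Nat.floor_le_floor (by nlinarith)
      _ = n := Nat.floor_natCast n
  rw [Real.norm_of_nonneg (Ffun_nonneg hc0 hd0 pa pb n t)]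
  refine mul_le_mul ?_ ?_ (div_nonneg (hd0 _) hpb.le) (Finset.sum_nonneg fun j _ => div_nonneg (hc0 j) hpa.le)
  · refine Finset.single_le_sum (f := fun j => c j / (n:ℝ)^pa)
      (fun j _ => div_nonneg (hc0 j) hpa.le) (Finset.mem_range.mpr (by omega))
  · refine Finset.single_le_sum (f := fun j => d j / (n:ℝ)^pb)
      (fun j _ => div_nonneg (hd0 j) hpb.le) (Finset.mem_range.mpr (by omega))

lemma Ffun_sum_eq {c d : ℕ → ℝ} (hc0 : ∀ k, 0 ≤ c k) (hd0 : ∀ k, 0 ≤ d k)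
    (pa pb : ℝ) {n : ℕ} (hn : 1 ≤ n) :
    ∫ t in Set.Ioo (0:ℝ) 1, Ffun c d pa pb n t
      = (∑ k ∈ range n, c k * d (n-k)) / ((n:ℝ)^pa * (n:ℝ)^pb * n) := by
  have hnp : (0:ℝ) < n := by exact_mod_cast hn
  have h0 : ∫ t in Set.Ioo (0:ℝ) 1, Ffun c d pa pb n t
      = ∫ t in (0:ℝ)..1, Ffun c d pa pb n t := by
    rw [intervalIntegral.integral_of_le zero_le_one, MeasureTheory.integral_Ioc_eq_integral_Ioo]
  set a : ℕ → ℝ := fun k => k/n with ha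
  have hale : ∀ k : ℕ, a k ≤ a (k+1) := by
    intro k
    rw [ha]
    push_cast
    gcongr
    linarith
  have hint : ∀ k < n, IntervalIntegrable (Ffun c d pa pb n) volume (a k) (a (k+1)) := by
    intro k hk
    rw [intervalIntegrable_iff_integrableOn_Ioc_of_le (hale k)]
    refine (Ffun_integrableOn hc0 hd0 pa pb hn).mono_set (Set.Ioc_subset_Ioc ?_ ?_)
    · rw [ha]; positivity
    · rw [ha]
      rw [div_le_one hnp]
      push_cast
      exact_mod_cast Nat.cast_le.mpr (by omega : k + 1 ≤ n)
  have piece : ∀ k < n, ∫ t in a k..a (k+1), Ffun c d pa pb n t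
      = c k * d (n-k) / ((n:ℝ)^pa * (n:ℝ)^pb * n) := by
    intro k hk
    have heq : Set.EqOn (Ffun c d pa pb n)
        (fun _ => (c k / (n:ℝ)^pa) * (d (n-k) / (n:ℝ)^pb)) (Set.Ioo (a k) (a (k+1))) := by
      intro t ht
      obtain ⟨h1, h2⟩ := ht
      rw [ha] at h1 h2
      have ht0 : 0 ≤ t := le_trans (by positivity) h1.le
      have hfl : ⌊(n:ℝ)*t⌋₊ = k := by
        rw [Nat.floor_eq_iff (by positivity)]
        constructor
        · rw [div_lt_iff₀ hnp] at h1; linarith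
        · rw [lt_div_iff₀ hnp] at h2; push_cast at h2 ⊢; linarith
      simp only [Ffun, hfl]
    rw [intervalIntegral.integral_of_le (hale k), MeasureTheory.integral_Ioc_eq_integral_Ioo,
      MeasureTheory.setIntegral_congr_fun measurableSet_Ioo heq, MeasureTheory.setIntegral_const,
      Real.volume_real_Ioo_of_le (hale k)]
    have hd : a (k+1) - a k = 1/(n:ℝ) := by
      rw [ha]
      push_cast
      field_simp
      ring
    rw [hd, smul_eq_mul]
    ring
  have ha0 : a 0 = 0 := by rw [ha]; simp
  have han : a n = 1 := by rw [ha]; exact div_self hnp.ne'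
  calc ∫ t in Set.Ioo (0:ℝ) 1, Ffun c d pa pb n t
      = ∫ t in (0:ℝ)..1, Ffun c d pa pb n t := h0
    _ = ∫ t in (a 0)..(a n), Ffun c d pa pb n t := by rw [ha0, han]
    _ = ∑ k ∈ range n, ∫ t in (a k)..(a (k+1)), Ffun c d pa pb n t :=
        (intervalIntegral.sum_integral_adjacent_intervals hint).symm
    _ = ∑ k ∈ range n, c k * d (n-k) / ((n:ℝ)^pa * (n:ℝ)^pb * n) :=
        Finset.sum_congr rfl fun k hk => piece k (Finset.mem_range.mp hk)
    _ = (∑ k ∈ range n, c k * d (n-k)) / ((n:ℝ)^pa * (n:ℝ)^pb * n) := by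
        rw [Finset.sum_div]

end helpers

lemma Ffun_pointwise {al be A B : ℝ} {c d : ℕ → ℝ}
    (hc : Filter.Tendsto (fun k : ℕ => c k / (k:ℝ)^(al-1)) atTop (nhds A))
    (hd : Filter.Tendsto (fun k : ℕ => d k / (k:ℝ)^(be-1)) atTop (nhds B))
    {t : ℝ} (ht : t ∈ Set.Ioo (0:ℝ) 1) :
    Filter.Tendsto (fun n : ℕ => Ffun c d (al-1) (be-1) n t) atTop
      (nhds ((A * t^(al-1)) * (B * (1-t)^(be-1)))) := by
  obtain ⟨ht0, ht1⟩ := ht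
  have h1 := (hc.comp (floor_mul_tendsto_atTop ht0)).mul
    ((floor_mul_div_tendsto ht0).rpow_const (p := al-1) (Or.inl ht0.ne'))
  have h2 := (hd.comp (sub_floor_tendsto_atTop ht0 ht1)).mul
    ((sub_floor_div_tendsto ht0 ht1).rpow_const (p := be-1) (Or.inl (sub_ne_zero.mpr (ne_of_gt ht1))))
  refine (h1.mul h2).congr' ?_
  filter_upwards [(floor_mul_tendsto_atTop ht0).eventually_ge_atTop 1,
    (sub_floor_tendsto_atTop ht0 ht1).eventually_ge_atTop 1,
    eventually_ge_atTop 1] with n hk1 hm1 hn1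
  have hnp : (0:ℝ) < n := by exact_mod_cast hn1
  set k := ⌊(n:ℝ)*t⌋₊
  set m := n - ⌊(n:ℝ)*t⌋₊
  have hkp : (0:ℝ) < (k:ℝ)^(al-1) := Real.rpow_pos_of_pos (by exact_mod_cast hk1) _
  have hmp : (0:ℝ) < (m:ℝ)^(be-1) := Real.rpow_pos_of_pos (by exact_mod_cast hm1) _
  have e1 : ((k:ℝ)/n)^(al-1) = (k:ℝ)^(al-1)/(n:ℝ)^(al-1) :=
    Real.div_rpow (Nat.cast_nonneg _) (Nat.cast_nonneg _) _
  have e2 : ((m:ℝ)/n)^(be-1) = (m:ℝ)^(be-1)/(n:ℝ)^(be-1) :=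
    Real.div_rpow (Nat.cast_nonneg _) (Nat.cast_nonneg _) _
  show (c k / (k:ℝ)^(al-1) * ((k:ℝ)/n)^(al-1)) * (d m / (m:ℝ)^(be-1) * ((m:ℝ)/n)^(be-1))
      = Ffun c d (al-1) (be-1) n t
  rw [e1, e2, Ffun]
  field_simp
  rfl

lemma conv_tendsto {al be A B : ℝ} (ha : 0 < al) (hb : 0 < be) {c d : ℕ → ℝ}
    (hc0 : ∀ k, 0 ≤ c k) (hd0 : ∀ k, 0 ≤ d k)
    (hc : Filter.Tendsto (fun k : ℕ => c k / (k:ℝ)^(al-1)) atTop (nhds A))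
    (hd : Filter.Tendsto (fun k : ℕ => d k / (k:ℝ)^(be-1)) atTop (nhds B)) :
    Filter.Tendsto (fun n : ℕ => (∑ k ∈ range (n+1), c k * d (n-k)) / (n:ℝ)^(al+be-1)) atTop
      (nhds (A * B * (Real.Gamma al * Real.Gamma be / Real.Gamma (al+be)))) := by
  obtain ⟨Cc, hCc0, hCc⟩ := exists_bound hc0 hc
  obtain ⟨Cd, hCd0, hCd⟩ := exists_bound hd0 hd
  set pa := al - 1 with hpa
  set pb := be - 1 with hpb
  have hpa1 : -1 < pa := by rw [hpa]; linarith
  have hpb1 : -1 < pb := by rw [hpb]; linarith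
  -- dominated convergence
  set bound : ℝ → ℝ := fun t =>
    (((Cc + c 0) * (2:ℝ)^(-min pa 0)) * Cd) * (t^(min pa 0) * (1-t)^(min pb 0)) with hbd
  have hbound_int : Integrable bound (volume.restrict (Set.Ioo (0:ℝ) 1)) := by
    exact (beta_integrable (by rw [lt_min_iff]; exact ⟨hpa1, by norm_num⟩)
      (by rw [lt_min_iff]; exact ⟨hpb1, by norm_num⟩)).const_mul _
  have hDCT : Filter.Tendsto (fun n : ℕ => ∫ t in Set.Ioo (0:ℝ) 1, Ffun c d pa pb n t) atTop
      (nhds (∫ t in Set.Ioo (0:ℝ) 1, (A * t^pa) * (B * (1-t)^pb))) := by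
    refine MeasureTheory.tendsto_integral_filter_of_dominated_convergence bound ?_ ?_ hbound_int ?_
    · exact Filter.Eventually.of_forall fun n =>
        (Ffun_measurable c d pa pb n).aestronglyMeasurable
    · filter_upwards [eventually_ge_atTop 1] with n hn
      rw [ae_restrict_iff' measurableSet_Ioo]
      refine Filter.Eventually.of_forall fun t ht => ?_
      rw [Real.norm_of_nonneg (Ffun_nonneg hc0 hd0 pa pb n t)]
      have b1 := bound1 hCc0 hc0 hCc hn ht
      have b2 := bound2 hCd0 hCd hn ht
      have hb2nn : 0 ≤ d (n - ⌊(n:ℝ)*t⌋₊) / (n:ℝ)^pb :=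
        div_nonneg (hd0 _) (Real.rpow_nonneg (Nat.cast_nonneg _) _)
      have hb1nn : 0 ≤ (Cc + c 0) * (2:ℝ)^(-min pa 0) :=
        mul_nonneg (by linarith [hc0 0]) (Real.rpow_nonneg (by norm_num) _)
      calc Ffun c d pa pb n t
          ≤ (((Cc + c 0) * (2:ℝ)^(-min pa 0)) * t^(min pa 0)) * (Cd * (1-t)^(min pb 0)) := by
            refine mul_le_mul b1 b2 hb2nn (mul_nonneg hb1nn (Real.rpow_nonneg ht.1.le _))
        _ = bound t := by rw [hbd]; ring
    · rw [ae_restrict_iff' measurableSet_Ioo]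
      exact Filter.Eventually.of_forall fun t ht => Ffun_pointwise hc hd ht
  have hlim : (∫ t in Set.Ioo (0:ℝ) 1, (A * t^pa) * (B * (1-t)^pb))
      = A * B * (Real.Gamma al * Real.Gamma be / Real.Gamma (al+be)) := by
    have : ∀ t : ℝ, (A * t^pa) * (B * (1-t)^pb) = (A*B) * (t^pa * (1-t)^pb) := fun t => by ring
    simp_rw [this]
    rw [MeasureTheory.integral_const_mul, ← MeasureTheory.integral_Ioc_eq_integral_Ioo,
      ← intervalIntegral.integral_of_le zero_le_one, hpa, hpb, real_beta ha hb]
  rw [hlim] at hDCT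
  -- second piece tends to 0
  have hzero : Filter.Tendsto (fun n : ℕ => c n * d 0 / (n:ℝ)^(al+be-1)) atTop (nhds 0) := by
    have hbe : Filter.Tendsto (fun n : ℕ => ((n:ℝ)^be)⁻¹) atTop (nhds 0) :=
      (tendsto_inv_atTop_zero).comp ((tendsto_rpow_atTop hb).comp tendsto_natCast_atTop_atTop)
    have h := hc.mul (hbe.const_mul (d 0))
    rw [mul_zero, mul_zero] at h
    refine h.congr' ?_
    filter_upwards [eventually_ge_atTop 1] with n hn
    have hnp : (0:ℝ) < n := by exact_mod_cast hn
    have : (n:ℝ)^(al+be-1) = (n:ℝ)^(al-1) * (n:ℝ)^be := by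
      rw [← Real.rpow_add hnp]; ring_nf
    rw [this]
    have h1 : (n:ℝ)^(al-1) ≠ 0 := (Real.rpow_pos_of_pos hnp _).ne'
    have h2 : (n:ℝ)^be ≠ 0 := (Real.rpow_pos_of_pos hnp _).ne'
    field_simp
    rw [hpa]; ring
  have := hDCT.add hzero
  rw [add_zero] at this
  refine this.congr' ?_
  filter_upwards [eventually_ge_atTop 1] with n hn
  have hnp : (0:ℝ) < n := by exact_mod_cast hn
  rw [Ffun_sum_eq hc0 hd0 pa pb hn]
  have hden : (n:ℝ)^pa * (n:ℝ)^pb * n = (n:ℝ)^(al+be-1) := by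
    rw [← Real.rpow_add hnp, ← Real.rpow_add_one hnp.ne']
    congr 1
    rw [hpa, hpb]
    ring
  rw [hden, Finset.sum_range_succ, Nat.sub_self, add_div]


/-- Sum over compositions of `n` into `ℓ` nonnegative parts of `Π (n_y+1)^κ`. -/
noncomputable def Acomp (κ : ℝ) (ℓ n : ℕ) : ℝ :=
  ∑ x ∈ Finset.Nat.antidiagonalTuple ℓ n, ∏ y : Fin ℓ, ((x y : ℝ) + 1) ^ κ

lemma Acomp_succ (κ : ℝ) (ℓ n : ℕ) :
    Acomp κ (ℓ+1) n = ∑ k ∈ range (n+1), ((k:ℝ)+1)^κ * Acomp κ ℓ (n-k) := by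
  have h2 : ∑ k ∈ range (n+1), ((k:ℝ)+1)^κ * Acomp κ ℓ (n-k)
      = ∑ p ∈ (range (n+1)).sigma (fun k => Finset.Nat.antidiagonalTuple ℓ (n-k)),
          ((p.1:ℝ)+1)^κ * ∏ y : Fin ℓ, ((p.2 y : ℝ)+1)^κ := by
    rw [Finset.sum_sigma]
    simp [Acomp, Finset.mul_sum]
  rw [h2, Acomp]
  refine Finset.sum_bij' (fun x _ => (⟨x 0, Fin.tail x⟩ : Σ _ : ℕ, (Fin ℓ → ℕ)))
    (fun p _ => Fin.cons p.1 p.2) ?_ ?_ ?_ ?_ ?_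
  · intro x hx
    rw [Finset.Nat.mem_antidiagonalTuple, Fin.sum_univ_succ] at hx
    rw [Finset.mem_sigma, Finset.mem_range, Finset.Nat.mem_antidiagonalTuple]
    dsimp only
    refine ⟨by omega, ?_⟩
    simp only [Fin.tail]
    omega
  · intro p hp
    rw [Finset.mem_sigma, Finset.mem_range, Finset.Nat.mem_antidiagonalTuple] at hp
    rw [Finset.Nat.mem_antidiagonalTuple, Fin.sum_univ_succ]
    simp only [Fin.cons_zero, Fin.cons_succ]
    omega
  · intro x _; exact Fin.cons_self_tail x
  · intro p _; simp
  · intro x _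
    dsimp only
    rw [Fin.prod_univ_succ]
    simp [Fin.tail]


lemma Acomp_nonneg (κ : ℝ) (ℓ n : ℕ) : 0 ≤ Acomp κ ℓ n := by
  refine Finset.sum_nonneg fun x _ => Finset.prod_nonneg fun y _ => ?_
  exact Real.rpow_nonneg (by positivity) _

lemma aux_one (κ : ℝ) :
    Filter.Tendsto (fun n : ℕ => ((n:ℝ)+1)^κ / (n:ℝ)^κ) atTop (nhds 1) := by
  have h : Filter.Tendsto (fun n : ℕ => ((n:ℝ)+1)/n) atTop (nhds 1) := by
    have h0 : Filter.Tendsto (fun n : ℕ => 1 + 1/(n:ℝ)) atTop (nhds 1) := by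
      simpa using tendsto_const_nhds.add (tendsto_one_div_atTop_nhds_zero_nat (𝕜 := ℝ))
    refine h0.congr' ?_
    filter_upwards [eventually_ge_atTop 1] with n hn
    have hnp : (0:ℝ) < n := by exact_mod_cast hn
    field_simp
  have h2 := h.rpow_const (p := κ) (Or.inl one_ne_zero)
  rw [Real.one_rpow] at h2
  refine h2.congr' ?_
  filter_upwards [eventually_ge_atTop 1] with n hn
  have hnp : (0:ℝ) < n := by exact_mod_cast hn
  exact Real.div_rpow (by positivity) hnp.le κ

theorem Acomp_asymptotics (κ : ℝ) (hκ : -1 < κ) (ℓ : ℕ) (hℓ : 1 ≤ ℓ) :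
    Tendsto (fun n : ℕ => Acomp κ ℓ n / (n : ℝ) ^ ((κ + 1) * ℓ - 1)) atTop
      (nhds (Real.Gamma (κ + 1) ^ ℓ / Real.Gamma ((κ + 1) * ℓ))) := by
  induction ℓ, hℓ using Nat.le_induction with
  | base =>
    have h1 : ∀ n : ℕ, Acomp κ 1 n = ((n:ℝ)+1)^κ := by
      intro n
      rw [Acomp, Finset.Nat.antidiagonalTuple_one, Finset.sum_singleton, Fin.prod_univ_one]
      simp
    have h2 := aux_one κ
    have he : (κ+1) * ((1:ℕ):ℝ) - 1 = κ := by push_cast; ring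
    have hv : Real.Gamma (κ+1) ^ (1:ℕ) / Real.Gamma ((κ+1) * ((1:ℕ):ℝ)) = 1 := by
      rw [pow_one]
      push_cast
      rw [mul_one]
      exact div_self (Real.Gamma_pos_of_pos (by linarith)).ne'
    rw [he, hv]
    exact h2.congr fun n => by rw [h1 n]
  | succ ℓ hℓ1 ih =>
    have hb : (0:ℝ) < (κ+1) * ℓ := by
      have : (1:ℝ) ≤ ℓ := by exact_mod_cast hℓ1
      nlinarith
    have hc : Filter.Tendsto (fun k : ℕ => ((k:ℝ)+1)^κ / (k:ℝ)^((κ+1)-1)) atTop (nhds 1) := by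
      have := aux_one κ
      refine this.congr fun k => ?_
      rw [add_sub_cancel_right]
    have h := conv_tendsto (by linarith : (0:ℝ) < κ+1) hb
      (fun k => by positivity) (Acomp_nonneg κ ℓ) hc ih
    have he : (κ+1) + (κ+1)*(ℓ:ℝ) - 1 = (κ+1) * ((ℓ:ℕ)+1:ℕ) - 1 := by push_cast; ring
    have hΓ : Real.Gamma ((κ+1)*ℓ) ≠ 0 := (Real.Gamma_pos_of_pos hb).ne'
    have hv : (1:ℝ) * (Real.Gamma (κ+1) ^ ℓ / Real.Gamma ((κ+1)*ℓ)) *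
        (Real.Gamma (κ+1) * Real.Gamma ((κ+1)*ℓ) / Real.Gamma ((κ+1) + (κ+1)*ℓ))
        = Real.Gamma (κ+1) ^ (ℓ+1:ℕ) / Real.Gamma ((κ+1) * ((ℓ:ℕ)+1:ℕ)) := by
      have he2 : (κ+1) + (κ+1)*(ℓ:ℝ) = (κ+1) * ((ℓ:ℕ)+1:ℕ) := by push_cast; ring
      rw [← he2, pow_succ]
      have hΓ2 : Real.Gamma ((κ+1) + (κ+1)*ℓ) ≠ 0 :=
        (Real.Gamma_pos_of_pos (by linarith)).ne'
      field_simp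
    rw [he, hv] at h
    refine h.congr fun n => ?_
    rw [Acomp_succ]
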